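/- Let f : ℝ^d → ℝ be convex with L-Lipschitz gradient, g : ℝ^d → ℝ continuous convex, Φ = f + g, and s > 0. For all x, y ∈ ℝ^d and any subgradient γ ∈ ∂g(P_s(y)) satisfying the proximal optimality condition ∇f(y) + (1/s)(P_s(y) − y) + γ = 0, one has Φ(x) − Φ(P_s(y)) ≥ ⟨∇f(y) + γ, x − P_s(y)⟩ − (L/2)·‖P_s(y) − y‖². -/

import Mathlib

open scoped RealInnerProductSpace

section Aux

variable {d : ℕ}

private lemma line_hasDerivAt (f : EuclideanSpace ℝ (Fin d) → ℝ)
    (f' : EuclideanSpace ℝ (Fin d) → EuclideanSpace ℝ (Fin d))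
    (hf' : ∀ x, HasGradientAt f (f' x) x) (w v : EuclideanSpace ℝ (Fin d)) (t : ℝ) :
    HasDerivAt (fun t : ℝ => f (w + t • v)) ⟪f' (w + t • v), v⟫ t := by
  have h1 : HasDerivAt (fun t : ℝ => w + t • v) v t := by
    simpa using ((hasDerivAt_id t).smul_const v).const_add w
  have h2 := (hf' (w + t • v)).hasFDerivAt
  have h3 := h2.comp_hasDerivAt t h1
  simp at h3
  exact h3

private lemma grad_ineq (f : EuclideanSpace ℝ (Fin d) → ℝ)
    (f' : EuclideanSpace ℝ (Fin d) → EuclideanSpace ℝ (Fin d))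
    (hfconv : ConvexOn ℝ Set.univ f)
    (hf' : ∀ x, HasGradientAt f (f' x) x) (w z : EuclideanSpace ℝ (Fin d)) :
    f w + ⟪f' w, z - w⟫ ≤ f z := by
  set v := z - w with hv
  set φ : ℝ → ℝ := fun t => f (w + t • v) with hφ
  have hconv : ConvexOn ℝ Set.univ φ := by
    have h := hfconv.comp_affineMap (AffineMap.lineMap w z)
    rw [Set.preimage_univ] at h
    suffices e : φ = f ∘ ⇑(AffineMap.lineMap w z) by rw [e]; exact h
    funext t
    show f (w + t • v) = f (AffineMap.lineMap w z t)
    rw [AffineMap.lineMap_apply]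
    rw [add_comm]
    rfl
  have hd : HasDerivAt φ ⟪f' w, v⟫ 0 := by
    have := line_hasDerivAt f f' hf' w v 0
    simpa using this
  have hslope := hconv.le_slope_of_hasDerivAt (Set.mem_univ (0:ℝ)) (Set.mem_univ (1:ℝ))
    one_pos hd
  have : ⟪f' w, v⟫ ≤ φ 1 - φ 0 := by
    simpa [slope_def_field] using hslope
  have hφ1 : φ 1 = f z := by simp [φ, v]
  have hφ0 : φ 0 = f w := by simp [φ]
  rw [hφ1, hφ0] at this
  linarith

private lemma descent_lemma (f : EuclideanSpace ℝ (Fin d) → ℝ)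
    (f' : EuclideanSpace ℝ (Fin d) → EuclideanSpace ℝ (Fin d))
    (L : ℝ) (hL : 0 < L)
    (hf' : ∀ x, HasGradientAt f (f' x) x)
    (hlip : ∀ x y, ‖f' x - f' y‖ ≤ L * ‖x - y‖) (w z : EuclideanSpace ℝ (Fin d)) :
    f z ≤ f w + ⟪f' w, z - w⟫ + L / 2 * ‖z - w‖ ^ 2 := by
  set v := z - w with hv
  set ψ : ℝ → ℝ := fun t => f (w + t • v) - t * ⟪f' w, v⟫ - L / 2 * ‖v‖ ^ 2 * t ^ 2 with hψ
  have hder : ∀ t : ℝ, HasDerivAt ψ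
      (⟪f' (w + t • v), v⟫ - ⟪f' w, v⟫ - L / 2 * ‖v‖ ^ 2 * (2 * t)) t := by
    intro t
    have h1 := line_hasDerivAt f f' hf' w v t
    have h2 := (hasDerivAt_id t).mul_const (⟪f' w, v⟫ : ℝ)
    have h3 := (hasDerivAt_pow 2 t).const_mul (L / 2 * ‖v‖ ^ 2)
    have := (h1.sub h2).sub h3
    simp at this
    exact this
  have hanti : AntitoneOn ψ (Set.Icc (0:ℝ) 1) := by
    apply antitoneOn_of_deriv_nonpos (convex_Icc 0 1)
    · exact (Differentiable.continuous (fun t => (hder t).differentiableAt)).continuousOn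
    · intro t _
      exact ((hder t).differentiableAt).differentiableWithinAt
    · intro t ht
      rw [interior_Icc] at ht
      rw [(hder t).deriv]
      have h1 : ⟪f' (w + t • v) - f' w, v⟫ ≤ ‖f' (w + t • v) - f' w‖ * ‖v‖ :=
        real_inner_le_norm _ _
      have h2 : ‖f' (w + t • v) - f' w‖ ≤ L * (t * ‖v‖) := by
        have := hlip (w + t • v) w
        simpa [norm_smul, abs_of_nonneg ht.1.le, mul_assoc] using this
      have h3 : ⟪f' (w + t • v), v⟫ - ⟪f' w, v⟫ ≤ L * t * ‖v‖ ^ 2 := by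
        rw [← inner_sub_left]
        calc ⟪f' (w + t • v) - f' w, v⟫ ≤ ‖f' (w + t • v) - f' w‖ * ‖v‖ := h1
          _ ≤ L * (t * ‖v‖) * ‖v‖ := by
              apply mul_le_mul_of_nonneg_right h2 (norm_nonneg _)
          _ = L * t * ‖v‖ ^ 2 := by ring
      nlinarith [sq_nonneg ‖v‖]
  have h01 := hanti (Set.left_mem_Icc.mpr zero_le_one) (Set.right_mem_Icc.mpr zero_le_one)
    zero_le_one
  have hψ1 : ψ 1 = f z - ⟪f' w, v⟫ - L / 2 * ‖v‖ ^ 2 := by simp [ψ, v]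
  have hψ0 : ψ 0 = f w := by simp [ψ]
  rw [hψ1, hψ0] at h01
  linarith

end Aux

/-- For `Φ = f + g`, any `γ ∈ ∂g(P_s(y))` satisfying the proximal optimality condition
`∇f(y) + (1/s)(P_s(y) − y) + γ = 0` gives
`Φ(x) − Φ(P_s(y)) ≥ ⟨∇f(y) + γ, x − P_s(y)⟩ − (L/2)‖P_s(y) − y‖²`. -/
theorem composite_lower_bound_at_prox {d : ℕ}
    (f g : EuclideanSpace ℝ (Fin d) → ℝ)
    (f' : EuclideanSpace ℝ (Fin d) → EuclideanSpace ℝ (Fin d))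
    (L s : ℝ) (hL : 0 < L) (hs : 0 < s)
    (hfconv : ConvexOn ℝ Set.univ f)
    (hf' : ∀ x, HasGradientAt f (f' x) x)
    (hlip : ∀ x y, ‖f' x - f' y‖ ≤ L * ‖x - y‖)
    (hgconv : ConvexOn ℝ Set.univ g) (hgcont : Continuous g)
    (Φ : EuclideanSpace ℝ (Fin d) → ℝ) (hΦ : ∀ x, Φ x = f x + g x)
    (P : EuclideanSpace ℝ (Fin d) → EuclideanSpace ℝ (Fin d))
    (hP : ∀ x, IsMinOn (fun z => 1 / (2 * s) * ‖z - (x - s • f' x)‖ ^ 2 + g z) Set.univ (P x)) :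
    ∀ (x y γ : EuclideanSpace ℝ (Fin d)),
      (∀ z : EuclideanSpace ℝ (Fin d), g z ≥ g (P y) + ⟪γ, z - P y⟫) →
      f' y + s⁻¹ • (P y - y) + γ = 0 →
      Φ x - Φ (P y) ≥ ⟪f' y + γ, x - P y⟫ - L / 2 * ‖P y - y‖ ^ 2 := by
  intro x y γ hsub _
  have hgx := hsub x
  have hfx : f y + ⟪f' y, x - y⟫ ≤ f x := grad_ineq f f' hfconv hf' y x
  have hfP : f (P y) ≤ f y + ⟪f' y, P y - y⟫ + L / 2 * ‖P y - y‖ ^ 2 :=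
    descent_lemma f f' L hL hf' hlip y (P y)
  have hinner : ⟪f' y, x - y⟫ - ⟪f' y, P y - y⟫ = ⟪f' y, x - P y⟫ := by
    rw [← inner_sub_right]
    congr 1
    abel
  have hsplit : ⟪f' y + γ, x - P y⟫ = ⟪f' y, x - P y⟫ + ⟪γ, x - P y⟫ := inner_add_left _ _ _
  rw [hΦ x, hΦ (P y), hsplit]
  linarith
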